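/- Let ν be a finite nonnegative Borel measure on [0,∞) satisfying ∫₀^∞ t^{−d/2} dν(t) < ∞, and let ψ_ν(x) = ∫₀^∞ e^{−t‖x‖²} dν(t). Then for all z ∈ ℝ^d, ‖ψ_ν‖²_{L²(ℝ^d)} − ∫_{ℝ^d} ψ_ν(y)ψ_ν(y+z) dy = ∫₀^∞∫₀^∞ (π/(t₁+t₂))^{d/2} (1 − exp(−t₁t₂‖z‖²/(t₁+t₂))) dν(t₁) dν(t₂). -/

import Mathlib

open MeasureTheory

section aux

variable {d : ℕ}

private lemma gauss_integrable (b : ℝ) (hb : 0 < b) :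
    Integrable (fun v : EuclideanSpace ℝ (Fin d) => Real.exp (-(b * ‖v‖ ^ 2))) := by
  have h := (GaussianFourier.integrable_cexp_neg_mul_sq_norm_add (V := EuclideanSpace ℝ (Fin d))
    (b := (b : ℂ)) (by simpa using hb) 0 0).norm
  refine h.congr (Filter.Eventually.of_forall fun v => ?_)
  simp [Complex.norm_exp, ← Complex.ofReal_pow, ← Complex.ofReal_mul, neg_mul]

private lemma gauss_formula (w : EuclideanSpace ℝ (Fin d)) (t₁ t₂ : ℝ)
    (ht₁ : 0 < t₁) (ht₂ : 0 < t₂) :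
    ∫ y : EuclideanSpace ℝ (Fin d),
        Real.exp (-(t₁ * ‖y‖ ^ 2)) * Real.exp (-(t₂ * ‖y + w‖ ^ 2)) =
      (Real.pi / (t₁ + t₂)) ^ ((d : ℝ) / 2) *
        Real.exp (-(t₁ * t₂ * ‖w‖ ^ 2) / (t₁ + t₂)) := by
  have hs : 0 < t₁ + t₂ := by linarith
  have hnorm : ∀ y : EuclideanSpace ℝ (Fin d),
      t₁ * ‖y‖ ^ 2 + t₂ * ‖y + w‖ ^ 2
        = (t₁ + t₂) * ‖y + (t₂ / (t₁ + t₂)) • w‖ ^ 2 + t₁ * t₂ * ‖w‖ ^ 2 / (t₁ + t₂) := by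
    intro y
    rw [norm_add_sq_real, norm_add_sq_real, real_inner_smul_right, norm_smul,
      Real.norm_eq_abs, mul_pow, sq_abs]
    field_simp
    ring
  calc ∫ y : EuclideanSpace ℝ (Fin d),
        Real.exp (-(t₁ * ‖y‖ ^ 2)) * Real.exp (-(t₂ * ‖y + w‖ ^ 2))
      = ∫ y : EuclideanSpace ℝ (Fin d),
          Real.exp (-((t₁ + t₂) * ‖y + (t₂ / (t₁ + t₂)) • w‖ ^ 2)) *
            Real.exp (-(t₁ * t₂ * ‖w‖ ^ 2 / (t₁ + t₂))) := by
        congr 1 with y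
        rw [← Real.exp_add, ← Real.exp_add, ← neg_add, ← neg_add, hnorm y]
    _ = (∫ y : EuclideanSpace ℝ (Fin d),
          Real.exp (-((t₁ + t₂) * ‖y + (t₂ / (t₁ + t₂)) • w‖ ^ 2))) *
            Real.exp (-(t₁ * t₂ * ‖w‖ ^ 2 / (t₁ + t₂))) :=
        integral_mul_const _ _
    _ = (∫ y : EuclideanSpace ℝ (Fin d),
          Real.exp (-((t₁ + t₂) * ‖y‖ ^ 2))) *
            Real.exp (-(t₁ * t₂ * ‖w‖ ^ 2 / (t₁ + t₂))) := by
        rw [integral_add_right_eq_self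
          (fun y : EuclideanSpace ℝ (Fin d) => Real.exp (-((t₁ + t₂) * ‖y‖ ^ 2)))
          ((t₂ / (t₁ + t₂)) • w)]
    _ = (Real.pi / (t₁ + t₂)) ^ ((d : ℝ) / 2) *
            Real.exp (-(t₁ * t₂ * ‖w‖ ^ 2) / (t₁ + t₂)) := by
        have h := GaussianFourier.integral_rexp_neg_mul_sq_norm (V := EuclideanSpace ℝ (Fin d)) hs
        simp only [neg_mul] at h
        rw [h, finrank_euclideanSpace_fin, neg_div]

end aux

set_option maxHeartbeats 1000000 in
/-- For ψ_ν(x) = ∫₀^∞ e^{-t‖x‖²} dν(t) with ν finite and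
∫₀^∞ t^{-d/2} dν(t) < ∞, for every z:
‖ψ_ν‖²_{L²} − ∫ ψ_ν(y)ψ_ν(y+z) dy
  = ∫₀^∞∫₀^∞ (π/(t₁+t₂))^{d/2} (1 − e^{-t₁t₂‖z‖²/(t₁+t₂)}) dν(t₁) dν(t₂). -/
theorem l2_radial_shift_identity (d : ℕ)
    (ν : Measure ℝ) [IsFiniteMeasure ν]
    (hν : ν (Set.Iio 0) = 0) (hν0 : ν {0} = 0)
    (hmom : IntegrableOn (fun t : ℝ => t ^ (-(d : ℝ) / 2)) (Set.Ici 0) ν)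
    (ψ : EuclideanSpace ℝ (Fin d) → ℝ)
    (hψ : ∀ x, ψ x = ∫ t in Set.Ici (0 : ℝ), Real.exp (-(t * ‖x‖ ^ 2)) ∂ν)
    (z : EuclideanSpace ℝ (Fin d)) :
    (∫ y, (ψ y) ^ 2) - ∫ y, ψ y * ψ (y + z) =
      ∫ t₁ in Set.Ici (0 : ℝ), ∫ t₂ in Set.Ici (0 : ℝ),
        (Real.pi / (t₁ + t₂)) ^ ((d : ℝ) / 2) *
          (1 - Real.exp (-(t₁ * t₂ * ‖z‖ ^ 2) / (t₁ + t₂))) ∂ν ∂ν := by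
  set σ : Measure ℝ := ν.restrict (Set.Ici 0) with hσdef
  have hd2 : (0 : ℝ) ≤ (d : ℝ) / 2 := by positivity
  have hd24 : -((d : ℝ)) / 2 ≤ -((d : ℝ)) / 4 := by
    have : (0:ℝ) ≤ (d:ℝ) := Nat.cast_nonneg d
    linarith
  have hd4 : -((d : ℝ)) / 4 ≤ 0 := by
    have : (0:ℝ) ≤ (d:ℝ) := Nat.cast_nonneg d
    linarith
  have hmom' : Integrable (fun t : ℝ => t ^ (-(d : ℝ) / 2)) σ := hmom
  have hIic : σ (Set.Iic (0 : ℝ)) = 0 := by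
    rw [hσdef, Measure.restrict_apply measurableSet_Iic]
    have h : Set.Iic (0 : ℝ) ∩ Set.Ici 0 = {0} := by
      ext t; simp [le_antisymm_iff, and_comm]
    rw [h, hν0]
  have hσpos : ∀ᵐ t ∂σ, 0 < t := by
    rw [ae_iff]
    have h : {t : ℝ | ¬ 0 < t} = Set.Iic 0 := by ext t; simp
    rw [h, hIic]
  have haeprod : ∀ᵐ p : ℝ × ℝ ∂σ.prod σ, 0 < p.1 ∧ 0 < p.2 := by
    have h1 : ∀ᵐ p : ℝ × ℝ ∂σ.prod σ, 0 < p.1 := by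
      rw [ae_iff]
      have h : {p : ℝ × ℝ | ¬ 0 < p.1} = Set.Iic 0 ×ˢ Set.univ := by
        ext p; simp
      rw [h, Measure.prod_prod, hIic, zero_mul]
    have h2 : ∀ᵐ p : ℝ × ℝ ∂σ.prod σ, 0 < p.2 := by
      rw [ae_iff]
      have h : {p : ℝ × ℝ | ¬ 0 < p.2} = Set.univ ×ˢ Set.Iic 0 := by
        ext p; simp
      rw [h, Measure.prod_prod, hIic, mul_zero]
    exact h1.and h2
  -- integrability of the quarter-power moment
  have hmono4 : Integrable (fun t : ℝ => t ^ (-(d : ℝ) / 4)) σ := by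
    refine (hmom'.add (integrable_const 1)).mono'
      ((measurable_id.pow_const _).aestronglyMeasurable) ?_
    filter_upwards [hσpos] with t ht
    simp only [Pi.add_apply]
    rw [Real.norm_eq_abs, abs_of_nonneg (Real.rpow_nonneg ht.le _)]
    rcases le_or_gt 1 t with h1 | h1
    · have hb : t ^ (-(d : ℝ) / 4) ≤ 1 :=
        Real.rpow_le_one_of_one_le_of_nonpos h1 hd4
      have hb2 : 0 ≤ t ^ (-(d : ℝ) / 2) := Real.rpow_nonneg ht.le _
      linarith
    · have hb : t ^ (-(d : ℝ) / 4) ≤ t ^ (-(d : ℝ) / 2) :=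
        Real.rpow_le_rpow_of_exponent_ge ht h1.le hd24
      linarith
  -- pointwise bound on the Gaussian kernel mass
  have hbnd : ∀ p : ℝ × ℝ, 0 < p.1 → 0 < p.2 →
      (Real.pi / (p.1 + p.2)) ^ ((d : ℝ) / 2)
        ≤ Real.pi ^ ((d : ℝ) / 2) * (p.1 ^ (-(d : ℝ) / 4) * p.2 ^ (-(d : ℝ) / 4)) := by
    rintro ⟨t₁, t₂⟩ h1 h2
    have hs : 0 < t₁ + t₂ := by linarith
    have hpos12 : 0 < t₁ ^ ((1 : ℝ) / 2) * t₂ ^ ((1 : ℝ) / 2) := by positivity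
    have key : t₁ ^ ((1 : ℝ) / 2) * t₂ ^ ((1 : ℝ) / 2) ≤ t₁ + t₂ := by
      rcases le_total t₁ t₂ with h | h
      · calc t₁ ^ ((1 : ℝ) / 2) * t₂ ^ ((1 : ℝ) / 2)
            ≤ t₂ ^ ((1 : ℝ) / 2) * t₂ ^ ((1 : ℝ) / 2) := by
              have := Real.rpow_le_rpow h1.le h (by norm_num : (0:ℝ) ≤ 1/2)
              exact mul_le_mul_of_nonneg_right this (Real.rpow_nonneg h2.le _)
          _ = t₂ := by
              rw [← Real.rpow_add h2]; norm_num
          _ ≤ t₁ + t₂ := by linarith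
      · calc t₁ ^ ((1 : ℝ) / 2) * t₂ ^ ((1 : ℝ) / 2)
            ≤ t₁ ^ ((1 : ℝ) / 2) * t₁ ^ ((1 : ℝ) / 2) := by
              have := Real.rpow_le_rpow h2.le h (by norm_num : (0:ℝ) ≤ 1/2)
              exact mul_le_mul_of_nonneg_left this (Real.rpow_nonneg h1.le _)
          _ = t₁ := by
              rw [← Real.rpow_add h1]; norm_num
          _ ≤ t₁ + t₂ := by linarith
    have step1 : (Real.pi / (t₁ + t₂)) ^ ((d : ℝ) / 2)
        ≤ (Real.pi / (t₁ ^ ((1 : ℝ) / 2) * t₂ ^ ((1 : ℝ) / 2))) ^ ((d : ℝ) / 2) := by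
      apply Real.rpow_le_rpow (by positivity) ?_ hd2
      gcongr
    have e1 : t₁ ^ (-(d : ℝ) / 4) = ((t₁ ^ ((1 : ℝ) / 2)) ^ ((d : ℝ) / 2))⁻¹ := by
      rw [← Real.rpow_neg (Real.rpow_nonneg h1.le _), ← Real.rpow_mul h1.le]
      congr 1; ring
    have e2 : t₂ ^ (-(d : ℝ) / 4) = ((t₂ ^ ((1 : ℝ) / 2)) ^ ((d : ℝ) / 2))⁻¹ := by
      rw [← Real.rpow_neg (Real.rpow_nonneg h2.le _), ← Real.rpow_mul h2.le]
      congr 1; ring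
    have step2 : (Real.pi / (t₁ ^ ((1 : ℝ) / 2) * t₂ ^ ((1 : ℝ) / 2))) ^ ((d : ℝ) / 2)
        = Real.pi ^ ((d : ℝ) / 2) * (t₁ ^ (-(d : ℝ) / 4) * t₂ ^ (-(d : ℝ) / 4)) := by
      rw [Real.div_rpow Real.pi_pos.le hpos12.le,
        Real.mul_rpow (Real.rpow_nonneg h1.le _) (Real.rpow_nonneg h2.le _), e1, e2]
      rw [div_eq_mul_inv, mul_inv]
    calc (Real.pi / (t₁ + t₂)) ^ ((d : ℝ) / 2)
        ≤ (Real.pi / (t₁ ^ ((1 : ℝ) / 2) * t₂ ^ ((1 : ℝ) / 2))) ^ ((d : ℝ) / 2) := step1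
      _ = _ := step2
  -- integrability of the limiting kernel
  have hGint : ∀ c : ℝ, 0 ≤ c → Integrable (fun p : ℝ × ℝ =>
      (Real.pi / (p.1 + p.2)) ^ ((d : ℝ) / 2) *
        Real.exp (-(p.1 * p.2 * c) / (p.1 + p.2))) (σ.prod σ) := by
    intro c hc
    have hdom : Integrable (fun p : ℝ × ℝ =>
        Real.pi ^ ((d : ℝ) / 2) * (p.1 ^ (-(d : ℝ) / 4) * p.2 ^ (-(d : ℝ) / 4)))
        (σ.prod σ) := (hmono4.mul_prod hmono4).const_mul _
    refine hdom.mono' ?_ ?_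
    · apply Measurable.aestronglyMeasurable
      exact ((measurable_const.div (measurable_fst.add measurable_snd)).pow_const _).mul
        ((((measurable_fst.mul measurable_snd).mul_const c).neg.div
          (measurable_fst.add measurable_snd)).exp)
    · filter_upwards [haeprod] with p hp
      have hb1 : 0 ≤ (Real.pi / (p.1 + p.2)) ^ ((d : ℝ) / 2) :=
        Real.rpow_nonneg (div_nonneg Real.pi_pos.le (by linarith [hp.1, hp.2])) _
      have hexp : Real.exp (-(p.1 * p.2 * c) / (p.1 + p.2)) ≤ 1 := by
        rw [Real.exp_le_one_iff]
        apply div_nonpos_of_nonpos_of_nonneg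
        · simp only [neg_nonpos]
          exact mul_nonneg (mul_nonneg hp.1.le hp.2.le) hc
        · linarith [hp.1, hp.2]
      rw [Real.norm_eq_abs, abs_mul, abs_of_nonneg hb1, Real.abs_exp]
      calc (Real.pi / (p.1 + p.2)) ^ ((d : ℝ) / 2) *
            Real.exp (-(p.1 * p.2 * c) / (p.1 + p.2))
          ≤ (Real.pi / (p.1 + p.2)) ^ ((d : ℝ) / 2) * 1 :=
            mul_le_mul_of_nonneg_left hexp hb1
        _ = (Real.pi / (p.1 + p.2)) ^ ((d : ℝ) / 2) := mul_one _
        _ ≤ _ := hbnd p hp.1 hp.2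
  -- integrability of the full kernel on the triple product
  have hint : ∀ w : EuclideanSpace ℝ (Fin d),
      Integrable (Function.uncurry fun (p : ℝ × ℝ) (y : EuclideanSpace ℝ (Fin d)) =>
        Real.exp (-(p.1 * ‖y‖ ^ 2)) * Real.exp (-(p.2 * ‖y + w‖ ^ 2)))
        ((σ.prod σ).prod volume) := by
    intro w
    have hcont : Continuous (Function.uncurry fun (p : ℝ × ℝ)
        (y : EuclideanSpace ℝ (Fin d)) =>
        Real.exp (-(p.1 * ‖y‖ ^ 2)) * Real.exp (-(p.2 * ‖y + w‖ ^ 2))) := by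
      unfold Function.uncurry
      fun_prop
    rw [integrable_prod_iff hcont.aestronglyMeasurable]
    constructor
    · filter_upwards [haeprod] with p hp
      refine (gauss_integrable p.1 hp.1).mono' ?_ ?_
      · exact (Continuous.aestronglyMeasurable (by fun_prop))
      · refine Filter.Eventually.of_forall fun y => ?_
        simp only [Function.uncurry_apply_pair]
        rw [Real.norm_eq_abs, abs_mul, Real.abs_exp, Real.abs_exp]
        have hle : Real.exp (-(p.2 * ‖y + w‖ ^ 2)) ≤ 1 := by
          rw [Real.exp_le_one_iff]
          simp only [neg_nonpos]
          exact mul_nonneg hp.2.le (sq_nonneg _)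
        exact mul_le_of_le_one_right (Real.exp_pos _).le hle
    · refine (hGint (‖w‖ ^ 2) (by positivity)).congr ?_
      filter_upwards [haeprod] with p hp
      rw [← gauss_formula w p.1 p.2 hp.1 hp.2]
      refine integral_congr_ae (Filter.Eventually.of_forall fun y => ?_)
      simp only [Function.uncurry_apply_pair]
      rw [Real.norm_eq_abs, abs_mul, Real.abs_exp, Real.abs_exp]
  -- the shifted L² pairing as a double integral
  have hψprod : ∀ w : EuclideanSpace ℝ (Fin d),
      (∫ y, ψ y * ψ (y + w)) =
        ∫ p : ℝ × ℝ, (Real.pi / (p.1 + p.2)) ^ ((d : ℝ) / 2) *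
          Real.exp (-(p.1 * p.2 * ‖w‖ ^ 2) / (p.1 + p.2)) ∂σ.prod σ := by
    intro w
    have h1 : ∀ y : EuclideanSpace ℝ (Fin d), ψ y * ψ (y + w)
        = ∫ p : ℝ × ℝ, Real.exp (-(p.1 * ‖y‖ ^ 2)) *
            Real.exp (-(p.2 * ‖y + w‖ ^ 2)) ∂σ.prod σ := by
      intro y
      rw [hψ, hψ, ← integral_prod_mul]
    calc (∫ y, ψ y * ψ (y + w))
        = ∫ y, ∫ p : ℝ × ℝ, Real.exp (-(p.1 * ‖y‖ ^ 2)) *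
            Real.exp (-(p.2 * ‖y + w‖ ^ 2)) ∂σ.prod σ := by
          exact integral_congr_ae (Filter.Eventually.of_forall fun y => h1 y)
      _ = ∫ p : ℝ × ℝ, ∫ y, Real.exp (-(p.1 * ‖y‖ ^ 2)) *
            Real.exp (-(p.2 * ‖y + w‖ ^ 2)) ∂volume ∂σ.prod σ :=
          (integral_integral_swap (hint w)).symm
      _ = ∫ p : ℝ × ℝ, (Real.pi / (p.1 + p.2)) ^ ((d : ℝ) / 2) *
            Real.exp (-(p.1 * p.2 * ‖w‖ ^ 2) / (p.1 + p.2)) ∂σ.prod σ := by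
          refine integral_congr_ae ?_
          filter_upwards [haeprod] with p hp
          exact gauss_formula w p.1 p.2 hp.1 hp.2
  have hzero : (∫ y, (ψ y) ^ 2) =
      ∫ p : ℝ × ℝ, (Real.pi / (p.1 + p.2)) ^ ((d : ℝ) / 2) *
        Real.exp (-(p.1 * p.2 * ‖(0 : EuclideanSpace ℝ (Fin d))‖ ^ 2) / (p.1 + p.2))
        ∂σ.prod σ := by
    rw [← hψprod 0]
    simp [sq]
  have hsub : Integrable (fun p : ℝ × ℝ =>
      (Real.pi / (p.1 + p.2)) ^ ((d : ℝ) / 2) *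
        Real.exp (-(p.1 * p.2 * ‖(0 : EuclideanSpace ℝ (Fin d))‖ ^ 2) / (p.1 + p.2)) -
      (Real.pi / (p.1 + p.2)) ^ ((d : ℝ) / 2) *
        Real.exp (-(p.1 * p.2 * ‖z‖ ^ 2) / (p.1 + p.2))) (σ.prod σ) :=
    (hGint _ (by positivity)).sub (hGint _ (by positivity))
  rw [hzero, hψprod z,
    ← integral_sub (hGint _ (by positivity)) (hGint _ (by positivity)),
    integral_prod _ hsub]
  refine integral_congr_ae (Filter.Eventually.of_forall fun t₁ => ?_)
  refine integral_congr_ae (Filter.Eventually.of_forall fun t₂ => ?_)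
  simp only [norm_zero, mul_sub, mul_one]
  norm_num
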